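/- With ω the branch of the solution of r_s/r = ω^(1/2)(1-ω) with ω → 1 as r_s/r → 0, the function e^λ = (2ω/(3ω-1))^2 has the expansion 1 + (r_s/r) + (9/4)(r_s/r)^2 + (43/8)(r_s/r)^3 + (211/16)(r_s/r)^4 + O((r_s/r)^5). -/

import Mathlib

open Real Set Filter Asymptotics

noncomputable def Rfun : ℝ → ℝ := fun s =>
  (-1 - 6*s - (65/4)*s^2 - (237/8)*s^3 - (653/16)*s^4 - (127/16)*s^5
    + (3677/16)*s^6 + (12799/16)*s^7 + (21381/16)*s^8 + (19623/16)*s^9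
    + (9495/16)*s^10 + (1899/16)*s^11)
  / (s^5 * (1+s)^5 * (3*s^2-1)^2)

/-- With ω the branch of x = √ω(1-ω) with ω → 1 as x = r_s/r → 0⁺, the function
e^λ = (2ω/(3ω-1))² has the expansion
1 + x + (9/4)x² + (43/8)x³ + (211/16)x⁴ + O(x⁵). -/
theorem stmt_6 (ω : ℝ → ℝ) (ε : ℝ) (hε : 0 < ε)
    (heq : ∀ x ∈ Ioo (0 : ℝ) ε, x = Real.sqrt (ω x) * (1 - ω x))
    (hlim : Tendsto ω (nhdsWithin 0 (Ioi 0)) (nhds 1)) :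
    (fun x => (2 * ω x / (3 * ω x - 1)) ^ 2
        - (1 + x + (9/4) * x ^ 2 + (43/8) * x ^ 3 + (211/16) * x ^ 4))
      =O[nhdsWithin 0 (Ioi 0)] fun x => x ^ 5 := by
  set l := nhdsWithin (0:ℝ) (Ioi 0)
  have hA : ∀ᶠ x in l, x ∈ Ioo (0:ℝ) ε :=
    Ioo_mem_nhdsGT_of_mem ⟨le_refl 0, hε⟩
  have hB : ∀ᶠ x in l, ω x ∈ Ioo (3/4 : ℝ) (5/4) :=
    hlim (Ioo_mem_nhds (by norm_num) (by norm_num))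
  have hs1 : Tendsto (fun x => Real.sqrt (ω x)) l (nhds 1) := by
    have := (Real.continuous_sqrt.tendsto 1).comp hlim
    simpa [Function.comp_def] using this
  have hRcont : ContinuousAt Rfun 1 := by
    apply ContinuousAt.div
    · fun_prop
    · fun_prop
    · norm_num
  have hs2 : Tendsto (fun x => Rfun (Real.sqrt (ω x))) l (nhds (Rfun 1)) :=
    hRcont.tendsto.comp hs1
  have hC : ∀ᶠ x in l, |Rfun (Real.sqrt (ω x))| < |Rfun 1| + 1 := by
    have : Tendsto (fun x => |Rfun (Real.sqrt (ω x))|) l (nhds (|Rfun 1|)) :=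
      hs2.abs
    exact this.eventually_lt_const (by linarith)
  rw [isBigO_iff]
  refine ⟨|Rfun 1| + 1, ?_⟩
  filter_upwards [hA, hB, hC] with x hx hω hR
  have hωpos : (0:ℝ) ≤ ω x := by linarith [hω.1]
  set s := Real.sqrt (ω x) with hs
  have hsq : s ^ 2 = ω x := Real.sq_sqrt hωpos
  have hspos : 0 < s := Real.sqrt_pos.mpr (by linarith [hω.1])
  have hden : 3 * s ^ 2 - 1 ≠ 0 := by rw [hsq]; linarith [hω.1]
  have hxeq : x = s * (1 - s ^ 2) := by rw [hsq]; exact heq x hx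
  have key : (2 * ω x / (3 * ω x - 1)) ^ 2
        - (1 + x + (9/4) * x ^ 2 + (43/8) * x ^ 3 + (211/16) * x ^ 4)
      = x ^ 5 * Rfun s := by
    rw [← hsq, hxeq, Rfun]
    have h1 : (1:ℝ) + s ≠ 0 := by positivity
    rw [div_pow, div_sub' (pow_ne_zero 2 hden), mul_div_assoc', div_eq_div_iff (pow_ne_zero 2 hden) (by positivity)]
    ring
  rw [key, Real.norm_eq_abs, Real.norm_eq_abs, abs_mul, mul_comm]
  exact mul_le_mul_of_nonneg_right hR.le (abs_nonneg _)
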